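/- For irrational x with continued fraction x = [a_0; a_1, a_2, …], the intermediate convergents (k p_{n−1} + p_{n−2})/(k q_{n−1} + q_{n−2}) with 1 ≤ k < a_n satisfy |q_{n,k} x − p_{n,k}| > |q_{n,k+1} x − p_{n,k+1}| for 1 ≤ k < a_n − 1; that is, the quantities |q_{n,i} x − p_{n,i}| are strictly decreasing in i. -/

import Mathlib

/-- Iterates of the Gauss map procedure producing complete quotients of `x`:
`t₀ = x`, `tₙ₊₁ = 1/(tₙ − ⌊tₙ⌋)`. -/
noncomputable def gaussIter (x : ℝ) : ℕ → ℝ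
  | 0 => x
  | n + 1 => (gaussIter x n - ⌊gaussIter x n⌋)⁻¹

/-- The partial quotients `aₙ = ⌊tₙ⌋` of the regular continued fraction of `x`. -/
noncomputable def cfA (x : ℝ) (n : ℕ) : ℤ := ⌊gaussIter x n⌋

/-- Numerators of the principal convergents, shifted by one:
`cfP x 0 = p₋₁ = 1`, `cfP x (n+1) = pₙ`. -/
noncomputable def cfP (x : ℝ) : ℕ → ℤ
  | 0 => 1
  | 1 => ⌊x⌋
  | n + 2 => cfA x (n + 1) * cfP x (n + 1) + cfP x n

/-- Denominators of the principal convergents, shifted by one: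
`cfQ x 0 = q₋₁ = 0`, `cfQ x (n+1) = qₙ`. -/
noncomputable def cfQ (x : ℝ) : ℕ → ℤ
  | 0 => 0
  | 1 => 1
  | n + 2 => cfA x (n + 1) * cfQ x (n + 1) + cfQ x n

/-- Error term `E_m = q_{m-1} x - p_{m-1}` (shifted indexing). -/
noncomputable def cfE (x : ℝ) (m : ℕ) : ℝ := (cfQ x m : ℝ) * x - (cfP x m : ℝ)

lemma irrational_gaussIter {x : ℝ} (hx : Irrational x) (n : ℕ) :
    Irrational (gaussIter x n) := by
  induction n with
  | zero => exact hx
  | succ n ih =>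
    show Irrational (gaussIter x n - ⌊gaussIter x n⌋)⁻¹
    exact ((ih.sub_intCast _)).inv

lemma gaussIter_gt_one {x : ℝ} (hx : Irrational x) (n : ℕ) :
    1 < gaussIter x (n + 1) := by
  have hirr : Irrational (gaussIter x n) := irrational_gaussIter hx n
  have hfrac : gaussIter x n - ⌊gaussIter x n⌋ = Int.fract (gaussIter x n) := rfl
  have h0 : 0 < Int.fract (gaussIter x n) := by
    rcases lt_or_eq_of_le (Int.fract_nonneg (gaussIter x n)) with h | h
    · exact h
    · exfalso
      have := (hirr.sub_intCast ⌊gaussIter x n⌋).ne_zero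
      rw [hfrac] at this
      exact this h.symm
  have h1 : Int.fract (gaussIter x n) < 1 := Int.fract_lt_one _
  show 1 < (gaussIter x n - ⌊gaussIter x n⌋)⁻¹
  rw [hfrac]
  exact (one_lt_inv₀ h0).mpr h1

lemma cfE_rec (x : ℝ) (m : ℕ) :
    cfE x (m + 2) = (cfA x (m + 1) : ℝ) * cfE x (m + 1) + cfE x m := by
  simp only [cfE, cfP, cfQ]
  push_cast
  ring

lemma cfE_key {x : ℝ} (hx : Irrational x) (m : ℕ) :
    cfE x (m + 1) * gaussIter x (m + 1) = -cfE x m := by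
  induction m with
  | zero =>
    have h : x - (⌊x⌋ : ℝ) ≠ 0 := (hx.sub_intCast ⌊x⌋).ne_zero
    show cfE x 1 * (gaussIter x 0 - ⌊gaussIter x 0⌋)⁻¹ = -cfE x 0
    simp only [cfE, cfP, cfQ, gaussIter]
    push_cast
    field_simp
    ring
  | succ m ih =>
    set t := gaussIter x (m + 1) with ht
    have hirr : Irrational t := irrational_gaussIter hx (m + 1)
    have hf : t - (⌊t⌋ : ℝ) ≠ 0 := (hirr.sub_intCast ⌊t⌋).ne_zero
    have hE2 : cfE x (m + 2) = -cfE x (m + 1) * (t - (⌊t⌋ : ℝ)) := by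
      rw [cfE_rec]
      have ha : (cfA x (m + 1) : ℝ) = (⌊t⌋ : ℝ) := rfl
      rw [ha]
      nlinarith [ih]
    show cfE x (m + 2) * (t - ⌊t⌋)⁻¹ = -cfE x (m + 1)
    rw [hE2]
    have hf2 : Int.fract t ≠ 0 := hf
    field_simp

lemma cfE_ne_zero {x : ℝ} (hx : Irrational x) (m : ℕ) : cfE x m ≠ 0 := by
  induction m with
  | zero =>
    simp [cfE, cfP, cfQ]
  | succ m ih =>
    have ht : 1 < gaussIter x (m + 1) := gaussIter_gt_one hx m
    have hkey := cfE_key hx m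
    intro h
    rw [h, zero_mul] at hkey
    exact ih (by linarith [neg_eq_zero.mp hkey.symm])

lemma cfE_sign {x : ℝ} (hx : Irrational x) (m : ℕ) :
    cfE x (m + 1) * cfE x m < 0 := by
  have ht : 1 < gaussIter x (m + 1) := gaussIter_gt_one hx m
  have hkey := cfE_key hx m
  have hne : cfE x (m + 1) ≠ 0 := cfE_ne_zero hx (m + 1)
  have : cfE x m = -(cfE x (m + 1) * gaussIter x (m + 1)) := by linarith
  rw [this]
  have h2 : 0 < cfE x (m + 1) ^ 2 := by positivity
  nlinarith

/-- the quantities `|q_{n,k} x − p_{n,k}|` attached to the intermediate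
convergents are strictly decreasing in `k` for `1 ≤ k < aₙ`. -/
theorem intermediate_convergents_strictly_decreasing
    (x : ℝ) (hx : Irrational x) (n : ℕ) (hn : 1 ≤ n) (k : ℤ)
    (hk : 1 ≤ k) (hk2 : k + 1 < cfA x n) :
    |((k * cfQ x n + cfQ x (n - 1) : ℤ) : ℝ) * x - ((k * cfP x n + cfP x (n - 1) : ℤ) : ℝ)| >
      |(((k + 1) * cfQ x n + cfQ x (n - 1) : ℤ) : ℝ) * x -
        (((k + 1) * cfP x n + cfP x (n - 1) : ℤ) : ℝ)| := by
  obtain ⟨m, rfl⟩ : ∃ m, n = m + 1 := ⟨n - 1, (Nat.succ_pred_eq_of_pos hn).symm⟩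
  have hsub : m + 1 - 1 = m := rfl
  rw [hsub]
  set A := cfE x (m + 1) with hA
  set B := cfE x m with hB
  set a := cfA x (m + 1) with ha
  have hC : cfE x (m + 2) = (a : ℝ) * A + B := cfE_rec x m
  have hAB : A * B < 0 := cfE_sign hx m
  have hCA : cfE x (m + 2) * A < 0 := cfE_sign hx (m + 1)
  have hA0 : A ≠ 0 := cfE_ne_zero hx (m + 1)
  have hlhs : ((k * cfQ x (m + 1) + cfQ x m : ℤ) : ℝ) * x -
      ((k * cfP x (m + 1) + cfP x m : ℤ) : ℝ) = (k : ℝ) * A + B := by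
    simp only [hA, hB, cfE]
    push_cast
    ring
  have hrhs : (((k + 1) * cfQ x (m + 1) + cfQ x m : ℤ) : ℝ) * x -
      (((k + 1) * cfP x (m + 1) + cfP x m : ℤ) : ℝ) = ((k : ℝ) + 1) * A + B := by
    simp only [hA, hB, cfE]
    push_cast
    ring
  rw [hlhs, hrhs]
  have hk1 : (1 : ℝ) ≤ (k : ℝ) := by exact_mod_cast hk
  have hka : (k : ℝ) + 2 ≤ (a : ℝ) := by
    have : k + 2 ≤ a := by omega
    exact_mod_cast this
  rw [hC] at hCA
  rcases lt_or_gt_of_ne hA0 with hAneg | hApos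
  · -- A < 0, so B > 0, aA + B > 0, so B > -aA = a|A|
    have hBpos : 0 < B := by nlinarith
    have hCpos : 0 < (a : ℝ) * A + B := by nlinarith
    have h1 : 0 < (k : ℝ) * A + B := by nlinarith
    have h2 : 0 < ((k : ℝ) + 1) * A + B := by nlinarith
    rw [abs_of_pos h1, abs_of_pos h2]
    linarith
  · -- A > 0, B < 0, aA + B < 0
    have hBneg : B < 0 := by nlinarith
    have hCneg : (a : ℝ) * A + B < 0 := by nlinarith
    have h1 : (k : ℝ) * A + B < 0 := by nlinarith
    have h2 : ((k : ℝ) + 1) * A + B < 0 := by nlinarith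
    rw [abs_of_neg h1, abs_of_neg h2]
    linarith
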